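/- Let α > −1 and let ε₀ be a real with 0 < ε₀ < √(3(α+1)). Then there exist constants c₁, c₂ > 0 such that for every real z with ε₀ ≤ z ≤ min(2, √(3(α+1))): c₁ ≤ |J_α(z)| ≤ c₂, where J_α is the Bessel function of the first kind of order α. -/

import Mathlib

/-- The Bessel function of the first kind of order `α`, defined by its power
series (with real powers of the positive base `z/2`). -/
noncomputable def besselJ (α z : ℝ) : ℝ :=
  ∑' ν : ℕ, (-1 : ℝ) ^ ν / ((ν.factorial : ℝ) * Real.Gamma ((ν : ℝ) + α + 1)) *
    (z / 2) ^ (2 * (ν : ℝ) + α)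

section aux

variable {α : ℝ} (hα : -1 < α)

/-- The coefficient of the Bessel series. -/
noncomputable def besselA (α : ℝ) (ν : ℕ) : ℝ :=
  1 / ((ν.factorial : ℝ) * Real.Gamma ((ν : ℝ) + α + 1))

lemma besselA_pos (hα : -1 < α) (ν : ℕ) : 0 < besselA α ν := by
  have h1 : (0 : ℝ) < ν.factorial := by exact_mod_cast ν.factorial_pos
  have h2 : (0 : ℝ) < Real.Gamma ((ν : ℝ) + α + 1) := by
    apply Real.Gamma_pos_of_pos
    have h3 : (0 : ℝ) ≤ ν := Nat.cast_nonneg ν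
    linarith
  exact div_pos one_pos (mul_pos h1 h2)

lemma besselA_succ (hα : -1 < α) (ν : ℕ) :
    besselA α (ν + 1) = besselA α ν / (((ν : ℝ) + 1) * ((ν : ℝ) + α + 1)) := by
  have hx : ((ν : ℝ) + α + 1) ≠ 0 := by
    have : (0 : ℝ) ≤ ν := Nat.cast_nonneg ν
    intro h; linarith
  have hg : Real.Gamma (((ν : ℕ) + 1 : ℕ) + α + 1) =
      ((ν : ℝ) + α + 1) * Real.Gamma ((ν : ℝ) + α + 1) := by
    have := Real.Gamma_add_one hx
    push_cast
    rw [show (ν : ℝ) + 1 + α + 1 = ((ν : ℝ) + α + 1) + 1 by ring, this]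
  unfold besselA
  rw [hg, Nat.factorial_succ]
  push_cast
  field_simp

lemma besselA_summable (hα : -1 < α) : Summable (besselA α) := by
  apply summable_of_ratio_norm_eventually_le (r := 1/2) (by norm_num)
  have hev : ∀ᶠ ν : ℕ in Filter.atTop, (2 : ℝ) ≤ ((ν : ℝ) + 1) * ((ν : ℝ) + α + 1) := by
    filter_upwards [Filter.eventually_ge_atTop (⌈2 - α⌉₊)] with ν hν
    have h1 : (2 - α : ℝ) ≤ ν := le_trans (Nat.le_ceil _) (by exact_mod_cast hν)
    nlinarith [Nat.cast_nonneg (α := ℝ) ν]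
  filter_upwards [hev] with ν hν
  rw [besselA_succ hα, Real.norm_eq_abs, Real.norm_eq_abs,
    abs_of_pos (besselA_pos hα _), abs_of_pos (by
      exact div_pos (besselA_pos hα _) (by nlinarith))]
  rw [div_le_iff₀ (by nlinarith)]
  calc besselA α ν = (1/2) * besselA α ν * 2 := by ring
    _ ≤ 1/2 * besselA α ν * (((ν:ℝ)+1) * ((ν:ℝ)+α+1)) := by
        have := besselA_pos hα ν
        nlinarith

end aux

set_option maxHeartbeats 1000000 in
theorem stmt_13 (α : ℝ) (hα : -1 < α) (ε0 : ℝ) (hε0 : 0 < ε0)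
    (hε0' : ε0 < Real.sqrt (3 * (α + 1))) :
    ∃ c1 c2 : ℝ, 0 < c1 ∧ 0 < c2 ∧
      ∀ z : ℝ, ε0 ≤ z → z ≤ min 2 (Real.sqrt (3 * (α + 1))) →
        c1 ≤ |besselJ α z| ∧ |besselJ α z| ≤ c2 := by
  have hA1 : 0 < α + 1 := by linarith
  set A : ℝ := ∑' ν, besselA α ν with hAdef
  have hAsum : Summable (besselA α) := besselA_summable hα
  have hApos : 0 < A := by
    exact Summable.tsum_pos hAsum (fun ν => (besselA_pos hα ν).le) 0 (besselA_pos hα 0)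
  have hΓpos : 0 < Real.Gamma (α + 1) := Real.Gamma_pos_of_pos hA1
  have ha0 : besselA α 0 = 1 / Real.Gamma (α + 1) := by
    simp [besselA]
  refine ⟨min ((ε0/2) ^ α) 1 * (1 / (4 * Real.Gamma (α + 1))),
    ((ε0/2) ^ α + 1) * A, ?_, ?_, ?_⟩
  · have : (0:ℝ) < (ε0/2) ^ α := Real.rpow_pos_of_pos (by linarith) α
    have h4 : (0:ℝ) < 1 / (4 * Real.Gamma (α + 1)) := by positivity
    exact mul_pos (lt_min this one_pos) h4
  · have : (0:ℝ) < (ε0/2) ^ α := Real.rpow_pos_of_pos (by linarith) α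
    nlinarith
  intro z hz1 hz2
  rw [le_min_iff] at hz2
  obtain ⟨hz2a, hz2b⟩ := hz2
  have hzpos : 0 < z := lt_of_lt_of_le hε0 hz1
  set x : ℝ := z / 2 with hxdef
  have hxpos : 0 < x := by positivity
  have hx1 : x ≤ 1 := by simp only [hxdef]; linarith
  set t : ℝ := x ^ 2 with htdef
  have htpos : 0 < t := by positivity
  have ht1 : t ≤ 1 := by
    rw [htdef]; nlinarith
  have hzsq : z ^ 2 ≤ 3 * (α + 1) := by
    have h3 : (0:ℝ) ≤ 3 * (α + 1) := by linarith
    nlinarith [Real.sq_sqrt h3, Real.sqrt_nonneg (3 * (α+1))]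
  have htb : t ≤ 3 * (α + 1) / 4 := by
    rw [htdef, hxdef]; nlinarith
  -- the series with the rpow factored out
  set f : ℕ → ℝ := fun ν => (-1 : ℝ) ^ ν * besselA α ν * t ^ ν with hfdef
  have hfabs : ∀ ν, |f ν| = besselA α ν * t ^ ν := by
    intro ν
    rw [hfdef]
    simp only [abs_mul, abs_pow, abs_neg, abs_one, one_pow, one_mul,
      abs_of_pos (besselA_pos hα ν), abs_of_pos htpos]
  have hgsum : Summable (fun ν => besselA α ν * t ^ ν) := by
    apply Summable.of_nonneg_of_le
      (fun ν => mul_nonneg (besselA_pos hα ν).le (pow_nonneg htpos.le ν))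
      (fun ν => ?_) hAsum
    calc besselA α ν * t ^ ν ≤ besselA α ν * 1 := by
          have := besselA_pos hα ν
          have : t ^ ν ≤ 1 := pow_le_one₀ htpos.le ht1
          nlinarith [besselA_pos hα ν]
      _ = besselA α ν := mul_one _
  have hfsum : Summable f := by
    apply Summable.of_norm
    simpa only [Real.norm_eq_abs, hfabs] using hgsum
  -- rewrite besselJ
  have hbJ : besselJ α z = x ^ α * ∑' ν, f ν := by
    rw [besselJ, ← tsum_mul_left]
    congr 1
    ext ν
    have hpow : (z / 2) ^ (2 * (ν : ℝ) + α) = x ^ α * t ^ ν := by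
      rw [← hxdef, Real.rpow_add hxpos, mul_comm (x ^ (2 * (ν:ℝ)))]
      congr 1
      rw [show (2 * (ν : ℝ)) = ((2 * ν : ℕ) : ℝ) by push_cast; ring,
        Real.rpow_natCast, pow_mul]
    rw [hpow, hfdef]
    simp only [besselA]
    ring
  -- the key decay estimate
  have hstep : ∀ ν : ℕ, besselA α (ν+1) * t ^ (ν+1) ≤ 3/4 * (besselA α ν * t ^ ν) := by
    intro ν
    have hν0 : (0:ℝ) ≤ ν := Nat.cast_nonneg ν
    have hd : (0:ℝ) < ((ν:ℝ)+1) * ((ν:ℝ)+α+1) := by nlinarith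
    rw [besselA_succ hα, pow_succ]
    rw [div_mul_eq_mul_div, div_le_iff₀ hd]
    have h1 : t ≤ 3/4 * (((ν:ℝ)+1) * ((ν:ℝ)+α+1)) := by nlinarith
    have h2 : (0:ℝ) ≤ besselA α ν * t ^ ν :=
      mul_nonneg (besselA_pos hα ν).le (pow_nonneg htpos.le ν)
    nlinarith [mul_le_mul_of_nonneg_left h1 h2]
  -- lower bound for S = ∑' f
  set S : ℝ := ∑' ν, f ν with hSdef
  have hS_lower : besselA α 0 / 4 ≤ S := by
    -- S = f 0 + f 1 + tail, tail ≥ 0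
    have h01 : S = f 0 + (f 1 + ∑' ν, f (ν + 2)) := by
      rw [hSdef, Summable.tsum_eq_zero_add hfsum,
        Summable.tsum_eq_zero_add ((summable_nat_add_iff 1).2 hfsum)]
    have htail : 0 ≤ ∑' ν, f (ν + 2) := by
      have hgsum2 : Summable (fun ν => f (ν + 2)) := (summable_nat_add_iff 2).2 hfsum
      have he : Summable (fun k => f (2 * k + 2)) := by
        have := hgsum2.comp_injective (f := fun ν => f (ν + 2))
          (i := fun k : ℕ => 2 * k) (fun a b hab => by dsimp at hab; omega)
        exact this
      have ho : Summable (fun k => f (2 * k + 1 + 2)) := by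
        have := hgsum2.comp_injective (f := fun ν => f (ν + 2))
          (i := fun k : ℕ => 2 * k + 1) (fun a b hab => by dsimp at hab; omega)
        exact this
      have heq := tsum_even_add_odd (f := fun ν => f (ν + 2)) he ho
      have hkey : ∑' k, -f (2 * k + 1 + 2) ≤ ∑' k, f (2 * k + 2) := by
        apply Summable.tsum_le_tsum _ (by simpa using ho.neg) he
        intro k
        have h1 : f (2 * k + 2) = besselA α (2*k+2) * t ^ (2*k+2) := by
          rw [hfdef]; simp [pow_succ, pow_mul]
        have h2 : -f (2 * k + 1 + 2) = besselA α (2*k+3) * t ^ (2*k+3) := by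
          rw [hfdef]
          have : (2 * k + 1 + 2) = 2 * (k+1) + 1 := by omega
          rw [this]
          simp [pow_succ, pow_mul]
        rw [h1, h2, show 2*k+3 = (2*k+2) + 1 by omega]
        calc besselA α ((2*k+2)+1) * t ^ ((2*k+2)+1)
            ≤ 3/4 * (besselA α (2*k+2) * t ^ (2*k+2)) := hstep _
          _ ≤ besselA α (2*k+2) * t ^ (2*k+2) := by
              nlinarith [besselA_pos hα (2*k+2), pow_nonneg htpos.le (2*k+2)]
      rw [tsum_neg] at hkey
      linarith [heq, hkey]
    have hf0 : f 0 = besselA α 0 := by rw [hfdef]; simp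
    have hf1 : -f 1 ≤ 3/4 * besselA α 0 := by
      have := hstep 0
      rw [hfdef]
      simp only [pow_one, pow_zero, mul_one] at this ⊢
      nlinarith
    rw [h01, hf0]
    linarith
  have hS_upper : |S| ≤ A := by
    rw [hSdef]
    calc |∑' ν, f ν| ≤ ∑' ν, |f ν| := by
          have hn : Summable (fun ν => ‖f ν‖) := by
            simpa only [Real.norm_eq_abs, hfabs] using hgsum
          simpa [Real.norm_eq_abs] using norm_tsum_le_tsum_norm hn
      _ = ∑' ν, besselA α ν * t ^ ν := by simp only [hfabs]
      _ ≤ A := by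
          apply Summable.tsum_le_tsum _ hgsum hAsum
          intro ν
          have h1 : t ^ ν ≤ 1 := pow_le_one₀ htpos.le ht1
          nlinarith [besselA_pos hα ν]
  have hSpos : 0 < S := lt_of_lt_of_le (div_pos (besselA_pos hα 0) (by norm_num)) hS_lower
  have hxa_pos : (0:ℝ) < x ^ α := Real.rpow_pos_of_pos hxpos α
  have habs : |besselJ α z| = x ^ α * S := by
    rw [hbJ, abs_mul, abs_of_pos hxa_pos, abs_of_pos hSpos]
  -- bounds on x ^ α
  have hε2 : 0 < ε0 / 2 := by linarith
  have hxlow : ε0 / 2 ≤ x := by rw [hxdef]; linarith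
  have hxa_lower : min ((ε0/2) ^ α) 1 ≤ x ^ α := by
    rcases le_or_gt 0 α with h | h
    · exact le_trans (min_le_left _ _) (Real.rpow_le_rpow hε2.le hxlow h)
    · refine le_trans (min_le_right _ _) ?_
      have := Real.rpow_le_rpow_of_nonpos hxpos hx1 h.le
      simpa using this
  have hxa_upper : x ^ α ≤ (ε0/2) ^ α + 1 := by
    rcases le_or_gt 0 α with h | h
    · have : x ^ α ≤ 1 := Real.rpow_le_one hxpos.le hx1 h
      have h0 : (0:ℝ) < (ε0/2) ^ α := Real.rpow_pos_of_pos hε2 α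
      linarith
    · have : x ^ α ≤ (ε0/2) ^ α := Real.rpow_le_rpow_of_nonpos hε2 hxlow h.le
      linarith
  constructor
  · rw [habs]
    have h1 : besselA α 0 / 4 = 1 / (4 * Real.Gamma (α+1)) := by
      rw [ha0]; field_simp
    calc min ((ε0/2) ^ α) 1 * (1 / (4 * Real.Gamma (α + 1)))
        ≤ x ^ α * (1 / (4 * Real.Gamma (α + 1))) := by
          apply mul_le_mul_of_nonneg_right hxa_lower (by positivity)
      _ ≤ x ^ α * S := by
          apply mul_le_mul_of_nonneg_left _ hxa_pos.le
          rw [← h1]; exact hS_lower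
  · rw [habs]
    calc x ^ α * S ≤ x ^ α * A := by
          apply mul_le_mul_of_nonneg_left _ hxa_pos.le
          calc S ≤ |S| := le_abs_self S
            _ ≤ A := hS_upper
      _ ≤ ((ε0/2) ^ α + 1) * A := mul_le_mul_of_nonneg_right hxa_upper hApos.le
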